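/- Lindström–Gessel–Viennot identity (compatible case): if additionally the vertex families U = (u₁,…,uₙ) and V = (v₁,…,vₙ) are compatible — meaning any path from uᵢ to v_k and any path from uⱼ to v_ℓ with i < j and k > ℓ must share a vertex — then the total weight of n-tuples of pairwise vertex-disjoint paths with pᵢ from uᵢ to vᵢ equals det(h(uᵢ,vⱼ))_{i,j=1}^{n}. -/

import Mathlib

open Finset

/-- `l` is (the list of vertices of) a directed path from `u` to `v` in the
directed graph with adjacency relation `Adj`. -/
def IsDirPath {V : Type*} (Adj : V → V → Prop) (u v : V) (l : List V) : Prop :=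
  l.Chain' Adj ∧ l.head? = some u ∧ l.getLast? = some v

/-- The weight of a path, given as a list of vertices: the product of the
weights of its edges. -/
def listWt {V R : Type*} [CommRing R] (w : V → V → R) (l : List V) : R :=
  ((l.zip l.tail).map fun ab => w ab.1 ab.2).prod

namespace LGVAux

variable {V : Type*} {R : Type*}

theorem listWt_nil [CommRing R] (w : V → V → R) : listWt w ([] : List V) = 1 := rfl

theorem listWt_single [CommRing R] (w : V → V → R) (x : V) : listWt w [x] = 1 := rfl

theorem listWt_cons₂ [CommRing R] (w : V → V → R) (a b : V) (l : List V) :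
    listWt w (a :: b :: l) = w a b * listWt w (b :: l) := by
  simp [listWt]

theorem listWt_append_cons [CommRing R] (w : V → V → R) (A : List V) (x : V) (B : List V) :
    listWt w (A ++ x :: B) = listWt w (A ++ [x]) * listWt w (x :: B) := by
  induction A with
  | nil => simp [listWt_single]
  | cons a A ih =>
    cases A with
    | nil => simp [listWt_cons₂, listWt_single, mul_assoc]
    | cons a' A' =>
      simp only [List.cons_append, listWt_cons₂] at *
      rw [ih, mul_assoc]

theorem nodup_of_chain' {Adj : V → V → Prop} (hacyc : ∀ a, ¬ Relation.TransGen Adj a a)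
    {l : List V} (h : l.Chain' Adj) : l.Nodup := by
  have h2 : l.Chain' (Relation.TransGen Adj) := h.imp fun a b => Relation.TransGen.single
  have h3 : l.Pairwise (Relation.TransGen Adj) := List.isChain_iff_pairwise.mp h2
  exact h3.imp fun {a b} hab => by rintro rfl; exact hacyc a hab

theorem head?_append_cons_eq (A : List V) (x : V) (B D : List V) :
    (A ++ x :: D).head? = (A ++ x :: B).head? := by
  cases A <;> simp

theorem dirPath_cross {Adj : V → V → Prop} {A B C D : List V} {x a b a' b' : V}
    (h₁ : IsDirPath Adj a b (A ++ x :: B)) (h₂ : IsDirPath Adj a' b' (C ++ x :: D)) :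
    IsDirPath Adj a b' (A ++ x :: D) := by
  obtain ⟨hc₁, hh₁, hl₁⟩ := h₁
  obtain ⟨hc₂, hh₂, hl₂⟩ := h₂
  refine ⟨?_, ?_, ?_⟩
  · have hA : (A ++ [x]).Chain' Adj := hc₁.prefix ⟨B, by simp⟩
    have hD : (x :: D).Chain' Adj := hc₂.suffix ⟨C, rfl⟩
    have : ((A ++ [x]) ++ D).Chain' Adj := by
      show List.IsChain Adj _
      rw [List.isChain_append]
      refine ⟨hA, hD.tail, ?_⟩
      intro y hy z hz
      rw [List.getLast?_append_cons, List.getLast?_singleton] at hy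
      obtain rfl : x = y := by simpa using hy
      exact (List.isChain_cons.mp hD).1 z hz
    simpa using this
  · rw [head?_append_cons_eq A x B D]; exact hh₁
  · rw [List.getLast?_append_cons]
    rw [List.getLast?_append_cons] at hl₂
    exact hl₂

section CanonStuff

variable {V : Type*} {n : ℕ}

/-- `P i` meets some other path. -/
def Meets (P : Fin n → List V) (i : Fin n) : Prop :=
  ∃ j, j ≠ i ∧ ∃ x, x ∈ P i ∧ x ∈ P j

/-- Data for the canonical tail-swap. -/
structure CData (V : Type*) (n : ℕ) where
  i₀ : Fin n
  j₀ : Fin n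
  A : List V
  B : List V
  C : List V
  D : List V
  x₀ : V

/-- Canonicity of swap data. -/
def IsCanon (P : Fin n → List V) (d : CData V n) : Prop :=
  (∀ i, i < d.i₀ → ¬ Meets P i) ∧
  P d.i₀ = d.A ++ d.x₀ :: d.B ∧
  (∀ a ∈ d.A, ∀ j, j ≠ d.i₀ → a ∉ P j) ∧
  d.j₀ ≠ d.i₀ ∧ d.x₀ ∈ P d.j₀ ∧
  (∀ j, j < d.j₀ → j ≠ d.i₀ → d.x₀ ∉ P j) ∧
  P d.j₀ = d.C ++ d.x₀ :: d.D ∧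
  d.x₀ ∉ d.C

def CData.flip (d : CData V n) : CData V n := ⟨d.i₀, d.j₀, d.A, d.D, d.C, d.B, d.x₀⟩

def swapP (P : Fin n → List V) (d : CData V n) : Fin n → List V :=
  Function.update (Function.update P d.i₀ (d.A ++ d.x₀ :: d.D)) d.j₀ (d.C ++ d.x₀ :: d.B)

theorem first_split {p : V → Prop} {l : List V} (h : ∃ x ∈ l, p x) :
    ∃ A x B, l = A ++ x :: B ∧ (∀ a ∈ A, ¬ p a) ∧ p x := by
  induction l with
  | nil => simp at h
  | cons a l ih =>
    by_cases hpa : p a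
    · exact ⟨[], a, l, rfl, by simp, hpa⟩
    · obtain ⟨x, hx, hpx⟩ := h
      rcases List.mem_cons.mp hx with rfl | hx
      · exact absurd hpx hpa
      obtain ⟨A, x', B, rfl, hA, hp⟩ := ih ⟨x, hx, hpx⟩
      refine ⟨a :: A, x', B, rfl, ?_, hp⟩
      intro a' ha'
      rcases List.mem_cons.mp ha' with rfl | ha'
      · exact hpa
      · exact hA a' ha'

theorem first_split_unique {p : V → Prop} :
    ∀ {A : List V} {x : V} {B A' : List V} {x' : V} {B' : List V},
    A ++ x :: B = A' ++ x' :: B' → (∀ a ∈ A, ¬ p a) → p x →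
    (∀ a ∈ A', ¬ p a) → p x' → A = A' ∧ x = x' ∧ B = B' := by
  intro A
  induction A with
  | nil =>
    intro x B A' x' B' h hA hx hA' hx'
    cases A' with
    | nil => simpa using h
    | cons a' A' =>
      simp only [List.nil_append, List.cons_append, List.cons.injEq] at h
      exact absurd (h.1 ▸ hx) (hA' a' (by simp))
  | cons a A ih =>
    intro x B A' x' B' h hA hx hA' hx'
    cases A' with
    | nil =>
      simp only [List.nil_append, List.cons_append, List.cons.injEq] at h
      exact absurd (h.1 ▸ hx') (hA a (by simp))
    | cons a' A' =>
      simp only [List.cons_append, List.cons.injEq] at h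
      obtain ⟨rfl, h⟩ := h
      obtain ⟨hAA, hxx, hBB⟩ := ih h (fun b hb => hA b (by simp [hb])) hx
        (fun b hb => hA' b (by simp [hb])) hx'
      exact ⟨by rw [hAA], hxx, hBB⟩

theorem exists_canon {P : Fin n → List V} (h : ∃ i, Meets P i) :
    ∃ d : CData V n, IsCanon P d := by
  classical
  obtain ⟨i', hi'⟩ := h
  let s : Finset (Fin n) := Finset.univ.filter fun i => Meets P i
  have hs : s.Nonempty := ⟨i', by simp [s, hi']⟩
  set i₀ := s.min' hs with hi₀def
  have hmem : Meets P i₀ := by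
    have := s.min'_mem hs; simpa [s] using this
  have hmin : ∀ i, i < i₀ → ¬ Meets P i := by
    intro i hlt hm
    exact absurd (s.min'_le i (by simp [s, hm])) (not_le.mpr hlt)
  obtain ⟨j, hj, x, hxi, hxj⟩ := hmem
  obtain ⟨A, x₀, B, hsplit, hA, hp⟩ :=
    first_split (p := fun y => ∃ j, j ≠ i₀ ∧ y ∈ P j) ⟨x, hxi, j, hj, hxj⟩
  let t : Finset (Fin n) := Finset.univ.filter fun j => j ≠ i₀ ∧ x₀ ∈ P j
  have ht : t.Nonempty := by
    obtain ⟨j', hj', hx'⟩ := hp; exact ⟨j', by simp [t, hj', hx']⟩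
  set j₀ := t.min' ht with hj₀def
  have hj₀ : j₀ ≠ i₀ ∧ x₀ ∈ P j₀ := by
    have := t.min'_mem ht; simpa [t] using this
  have hjmin : ∀ j, j < j₀ → j ≠ i₀ → x₀ ∉ P j := by
    intro j hlt hne hx
    exact absurd (t.min'_le j (by simp [t, hne, hx])) (not_le.mpr hlt)
  obtain ⟨C, x₀', D, hsplit2, hC, hx'⟩ :=
    first_split (p := fun y => y = x₀) ⟨x₀, hj₀.2, rfl⟩
  subst hx'
  refine ⟨⟨i₀, j₀, A, B, C, D, x₀'⟩, hmin, hsplit, ?_, hj₀.1, hj₀.2, hjmin, hsplit2, ?_⟩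
  · intro a ha j' hj' hmem'
    exact hA a ha ⟨j', hj', hmem'⟩
  · intro hc
    exact hC x₀' hc rfl

end CanonStuff

section CanonMore

variable {V : Type*} {n : ℕ}

theorem IsCanon.meets_i₀ {P : Fin n → List V} {d : CData V n} (h : IsCanon P d) :
    Meets P d.i₀ :=
  ⟨d.j₀, h.2.2.2.1, d.x₀, by rw [h.2.1]; simp, h.2.2.2.2.1⟩

theorem IsCanon.i₀_lt_j₀ {P : Fin n → List V} {d : CData V n} (h : IsCanon P d) :
    d.i₀ < d.j₀ := by
  have hm : Meets P d.j₀ :=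
    ⟨d.i₀, Ne.symm h.2.2.2.1, d.x₀, h.2.2.2.2.1, by rw [h.2.1]; simp⟩
  rcases lt_or_ge d.i₀ d.j₀ with h' | h'
  · exact h'
  · rcases lt_or_eq_of_le h' with h'' | h''
    · exact absurd hm (h.1 _ h'')
    · exact absurd h'' h.2.2.2.1

theorem canon_unique {P : Fin n → List V} {d d' : CData V n}
    (h : IsCanon P d) (h' : IsCanon P d') : d = d' := by
  obtain ⟨m1, s1, a1, ji1, xj1, jm1, s1', c1⟩ := h
  obtain ⟨m2, s2, a2, ji2, xj2, jm2, s2', c2⟩ := h'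
  have hm : Meets P d.i₀ := IsCanon.meets_i₀ ⟨m1, s1, a1, ji1, xj1, jm1, s1', c1⟩
  have hm' : Meets P d'.i₀ := IsCanon.meets_i₀ ⟨m2, s2, a2, ji2, xj2, jm2, s2', c2⟩
  have hii : d.i₀ = d'.i₀ :=
    le_antisymm (le_of_not_gt fun hl => m1 _ hl hm') (le_of_not_gt fun hl => m2 _ hl hm)
  rw [← hii] at s2 a2 ji2 jm2
  have hsplit : d.A ++ d.x₀ :: d.B = d'.A ++ d'.x₀ :: d'.B := s1.symm.trans s2
  have hfs := first_split_unique (p := fun y => ∃ j, j ≠ d.i₀ ∧ y ∈ P j) hsplit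
    (fun a ha hex => hex.elim fun j hj => a1 a ha j hj.1 hj.2)
    ⟨d.j₀, ji1, xj1⟩
    (fun a ha hex => hex.elim fun j hj => a2 a ha j hj.1 hj.2)
    ⟨d'.j₀, ji2, xj2⟩
  obtain ⟨hAA, hxx, hBB⟩ := hfs
  rw [← hxx] at xj2 jm2 s2' c2
  have hjj : d.j₀ = d'.j₀ :=
    le_antisymm (le_of_not_gt fun hl => jm1 _ hl ji2 xj2)
      (le_of_not_gt fun hl => jm2 _ hl ji1 xj1)
  rw [← hjj] at s2'
  have hsplit2 : d.C ++ d.x₀ :: d.D = d'.C ++ d.x₀ :: d'.D := s1'.symm.trans s2'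
  have hfs2 := first_split_unique (p := fun y => y = d.x₀) hsplit2
    (fun a ha => by rintro rfl; exact c1 ha) rfl
    (fun a ha => by rintro rfl; exact c2 ha) rfl
  obtain ⟨hCC, -, hDD⟩ := hfs2
  cases d; cases d'
  simp only at hii hjj hAA hBB hCC hDD hxx
  subst hii; subst hjj; subst hAA; subst hBB; subst hCC; subst hDD; subst hxx
  rfl

theorem swapP_i₀ (P : Fin n → List V) {d : CData V n} (hne : d.i₀ ≠ d.j₀) :
    swapP P d d.i₀ = d.A ++ d.x₀ :: d.D := by
  simp [swapP, Function.update_of_ne hne, Function.update_self]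

theorem swapP_j₀ (P : Fin n → List V) (d : CData V n) :
    swapP P d d.j₀ = d.C ++ d.x₀ :: d.B := by
  simp [swapP, Function.update_self]

theorem swapP_other (P : Fin n → List V) (d : CData V n) {k : Fin n}
    (h1 : k ≠ d.i₀) (h2 : k ≠ d.j₀) : swapP P d k = P k := by
  simp [swapP, Function.update_of_ne h1, Function.update_of_ne h2]

theorem isCanon_swap {P : Fin n → List V} {d : CData V n} (h : IsCanon P d)
    (hnd : (P d.i₀).Nodup) : IsCanon (swapP P d) d.flip := by
  obtain ⟨m1, s1, a1, ji1, xj1, jm1, s1', c1⟩ := h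
  have hIJ : d.i₀ < d.j₀ := IsCanon.i₀_lt_j₀ ⟨m1, s1, a1, ji1, xj1, jm1, s1', c1⟩
  have hne : d.i₀ ≠ d.j₀ := ne_of_lt hIJ
  have hPi : swapP P d d.i₀ = d.A ++ d.x₀ :: d.D := swapP_i₀ P hne
  have hPj : swapP P d d.j₀ = d.C ++ d.x₀ :: d.B := swapP_j₀ P d
  -- the union of vertices of the two swapped paths is unchanged
  have hunion : ∀ y : V, (y ∈ swapP P d d.i₀ ∨ y ∈ swapP P d d.j₀) ↔
      (y ∈ P d.i₀ ∨ y ∈ P d.j₀) := by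
    intro y
    rw [hPi, hPj, s1, s1']
    simp only [List.mem_append, List.mem_cons]
    tauto
  refine ⟨?_, ?_, ?_, ji1, ?_, ?_, ?_, c1⟩
  · -- minimality of i₀
    intro i hlt hm
    have hii : i ≠ d.i₀ := ne_of_lt hlt
    have hij : i ≠ d.j₀ := ne_of_lt (lt_trans hlt hIJ)
    obtain ⟨j, hjne, x, hxi, hxj⟩ := hm
    rw [swapP_other P d hii hij] at hxi
    apply m1 i hlt
    by_cases hj1 : j = d.i₀
    · subst hj1
      rcases (hunion x).mp (Or.inl hxj) with hx' | hx'
      · exact ⟨d.i₀, hjne, x, hxi, hx'⟩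
      · exact ⟨d.j₀, Ne.symm hij, x, hxi, hx'⟩
    · by_cases hj2 : j = d.j₀
      · subst hj2
        rcases (hunion x).mp (Or.inr hxj) with hx' | hx'
        · exact ⟨d.i₀, Ne.symm hii, x, hxi, hx'⟩
        · exact ⟨d.j₀, hjne, x, hxi, hx'⟩
      · rw [swapP_other P d hj1 hj2] at hxj
        exact ⟨j, hjne, x, hxi, hxj⟩
  · -- split of new P i₀
    simpa [CData.flip] using hPi
  · -- elements of A meet nothing else
    intro a ha j hj hmem
    simp only [CData.flip] at ha hj hmem ⊢
    by_cases hj2 : j = d.j₀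
    · subst hj2
      rw [hPj] at hmem
      rcases List.mem_append.mp hmem with hC | hxB
      · exact a1 a ha d.j₀ ji1 (by rw [s1']; exact List.mem_append.mpr (Or.inl hC))
      · rcases List.mem_cons.mp hxB with rfl | hB
        · exact a1 d.x₀ ha d.j₀ ji1 xj1
        · -- a ∈ A and a ∈ B contradicts Nodup (P i₀)
          rw [s1] at hnd
          rcases List.nodup_append'.mp hnd with ⟨-, -, hdisj⟩
          exact hdisj ha (List.mem_cons.mpr (Or.inr hB))
    · rw [swapP_other P d hj hj2] at hmem
      exact a1 a ha j hj hmem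
  · -- x₀ ∈ new P j₀
    simp only [CData.flip]
    rw [hPj]; simp
  · -- minimality of j₀
    intro j hlt hne'
    simp only [CData.flip] at hlt hne' ⊢
    have hj2 : j ≠ d.j₀ := ne_of_lt hlt
    rw [swapP_other P d hne' hj2]
    exact jm1 j hlt hne'
  · -- split of new P j₀
    simpa [CData.flip] using hPj

theorem swapP_flip {P : Fin n → List V} {d : CData V n} (h : IsCanon P d) :
    swapP (swapP P d) d.flip = P := by
  have hne : d.i₀ ≠ d.j₀ := ne_of_lt h.i₀_lt_j₀
  funext k
  by_cases hk1 : k = d.j₀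
  · subst hk1
    have := swapP_j₀ (swapP P d) d.flip
    simp only [CData.flip] at this ⊢
    rw [this, ← h.2.2.2.2.2.2.1]
  · by_cases hk2 : k = d.i₀
    · subst hk2
      have := swapP_i₀ (swapP P d) (d := d.flip) hne
      simp only [CData.flip] at this ⊢
      rw [this, ← h.2.1]
    · have h1 := swapP_other (swapP P d) d.flip (k := k) hk2 hk1
      exact h1.trans (swapP_other P d hk2 hk1)

end CanonMore

section Weights

variable {V : Type*} {R : Type*} {n : ℕ}

theorem listWt_cross [CommRing R] (w : V → V → R) (A B C D : List V) (x : V) :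
    listWt w (A ++ x :: D) * listWt w (C ++ x :: B)
      = listWt w (A ++ x :: B) * listWt w (C ++ x :: D) := by
  rw [listWt_append_cons w A x D, listWt_append_cons w C x B, listWt_append_cons w A x B,
    listWt_append_cons w C x D]
  ring

theorem prod_swapP [CommRing R] (w : V → V → R) {P : Fin n → List V} {d : CData V n}
    (h : IsCanon P d) :
    ∏ i, listWt w (swapP P d i) = ∏ i, listWt w (P i) := by
  classical
  have hne : d.i₀ ≠ d.j₀ := ne_of_lt h.i₀_lt_j₀
  have key : ∀ Q : Fin n → List V, ∏ i, listWt w (Q i)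
      = listWt w (Q d.j₀) * (listWt w (Q d.i₀) *
          ∏ i ∈ (Finset.univ.erase d.j₀).erase d.i₀, listWt w (Q i)) := by
    intro Q
    rw [← Finset.mul_prod_erase Finset.univ _ (Finset.mem_univ d.j₀),
      ← Finset.mul_prod_erase _ _ (Finset.mem_erase.mpr ⟨hne, Finset.mem_univ d.i₀⟩)]
  rw [key (swapP P d), key P]
  have hrest : ∏ i ∈ (Finset.univ.erase d.j₀).erase d.i₀, listWt w (swapP P d i)
      = ∏ i ∈ (Finset.univ.erase d.j₀).erase d.i₀, listWt w (P i) := by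
    refine Finset.prod_congr rfl fun i hi => ?_
    rw [Finset.mem_erase, Finset.mem_erase] at hi
    rw [swapP_other P d hi.1 hi.2.1]
  rw [hrest, swapP_i₀ P hne, swapP_j₀ P d, h.2.1, h.2.2.2.2.2.2.1, ← mul_assoc, ← mul_assoc,
    mul_comm (listWt w (d.C ++ d.x₀ :: d.B)) (listWt w (d.A ++ d.x₀ :: d.D)),
    listWt_cross w d.A d.B d.C d.D d.x₀, mul_comm (listWt w (d.A ++ d.x₀ :: d.B))]

end Weights

section BadSum

open Finset

variable {V : Type*} {R : Type*}

theorem not_disj_exists_meets {n : ℕ} {P : Fin n → List V}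
    (h : ¬ ∀ i j, i ≠ j → ∀ y : V, ¬(y ∈ P i ∧ y ∈ P j)) : ∃ i, Meets P i := by
  push_neg at h
  obtain ⟨i, j, hij, y, hy1, hy2⟩ := h
  exact ⟨i, j, Ne.symm hij, y, hy1, hy2⟩

theorem sum_bad_zero [Fintype V] [CommRing R]
    (Adj : V → V → Prop) (hacyc : ∀ a, ¬ Relation.TransGen Adj a a)
    (w : V → V → R) (n : ℕ) (u v : Fin n → V)
    [DecidablePred fun P : Fin n → List V => ¬ ∀ i j, i ≠ j → ∀ y : V, ¬(y ∈ P i ∧ y ∈ P j)]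
    (pf : Fin n → Fin n → Finset (List V))
    (hpf : ∀ i j p, p ∈ pf i j ↔ IsDirPath Adj (u i) (v j) p) :
    ∑ x ∈ (Finset.univ : Finset (Equiv.Perm (Fin n))).sigma
        (fun σ => (Fintype.piFinset fun i => pf i (σ i)).filter
          fun P => ¬ ∀ i j, i ≠ j → ∀ y : V, ¬(y ∈ P i ∧ y ∈ P j)),
      (Equiv.Perm.sign x.1) • ∏ i, listWt w (x.2 i) = 0 := by
  classical
  set Bad := (Finset.univ : Finset (Equiv.Perm (Fin n))).sigma
      (fun σ => (Fintype.piFinset fun i => pf i (σ i)).filter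
        fun P => ¬ ∀ i j, i ≠ j → ∀ y : V, ¬(y ∈ P i ∧ y ∈ P j)) with hBad
  set G : (Σ _ : Equiv.Perm (Fin n), Fin n → List V) → (Σ _ : Equiv.Perm (Fin n), Fin n → List V) :=
    fun a => if h : ∃ d : CData V n, IsCanon a.2 d then
      ⟨a.1 * Equiv.swap h.choose.i₀ h.choose.j₀, swapP a.2 h.choose⟩ else a with hG
  -- decode membership
  have hmemBad : ∀ a : (Σ _ : Equiv.Perm (Fin n), Fin n → List V), a ∈ Bad →
      (∀ i, IsDirPath Adj (u i) (v (a.1 i)) (a.2 i)) ∧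
        ¬ ∀ i j, i ≠ j → ∀ y : V, ¬(y ∈ a.2 i ∧ y ∈ a.2 j) := by
    intro a ha
    rw [hBad, Finset.mem_sigma, Finset.mem_filter, Fintype.mem_piFinset] at ha
    exact ⟨fun i => (hpf i (a.1 i) (a.2 i)).mp (ha.2.1 i), ha.2.2⟩
  -- main structural facts for a bad configuration
  have hkey : ∀ a : (Σ _ : Equiv.Perm (Fin n), Fin n → List V), a ∈ Bad →
      ∃ d : CData V n, IsCanon a.2 d ∧
        G a = ⟨a.1 * Equiv.swap d.i₀ d.j₀, swapP a.2 d⟩ ∧ (a.2 d.i₀).Nodup := by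
    intro a ha
    obtain ⟨hpath, hnd⟩ := hmemBad a ha
    have hex : ∃ d : CData V n, IsCanon a.2 d := exists_canon (not_disj_exists_meets hnd)
    refine ⟨hex.choose, hex.choose_spec, ?_, ?_⟩
    · rw [hG]; simp only [dif_pos hex]
    · exact nodup_of_chain' hacyc (hpath hex.choose.i₀).1
  have hGmem : ∀ a ∈ Bad, G a ∈ Bad := by
    intro a ha
    obtain ⟨hpath, hndisj⟩ := hmemBad a ha
    obtain ⟨d, hd, hGa, hnd⟩ := hkey a ha
    have hne : d.i₀ ≠ d.j₀ := ne_of_lt hd.i₀_lt_j₀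
    rw [hGa, hBad, Finset.mem_sigma, Finset.mem_filter, Fintype.mem_piFinset]
    dsimp only
    refine ⟨Finset.mem_univ _, fun k => ?_, ?_⟩
    · rw [hpf]
      by_cases hk1 : k = d.i₀
      · subst hk1
        rw [swapP_i₀ a.2 hne]
        have h1 : IsDirPath Adj (u d.i₀) (v (a.1 d.i₀)) (d.A ++ d.x₀ :: d.B) := by
          rw [← hd.2.1]; exact hpath d.i₀
        have h2 : IsDirPath Adj (u d.j₀) (v (a.1 d.j₀)) (d.C ++ d.x₀ :: d.D) := by
          rw [← hd.2.2.2.2.2.2.1]; exact hpath d.j₀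
        have := dirPath_cross h1 h2
        simpa [Equiv.Perm.mul_apply, Equiv.swap_apply_left] using this
      · by_cases hk2 : k = d.j₀
        · subst hk2
          rw [swapP_j₀ a.2 d]
          have h1 : IsDirPath Adj (u d.j₀) (v (a.1 d.j₀)) (d.C ++ d.x₀ :: d.D) := by
            rw [← hd.2.2.2.2.2.2.1]; exact hpath d.j₀
          have h2 : IsDirPath Adj (u d.i₀) (v (a.1 d.i₀)) (d.A ++ d.x₀ :: d.B) := by
            rw [← hd.2.1]; exact hpath d.i₀
          have := dirPath_cross h1 h2
          simpa [Equiv.Perm.mul_apply, Equiv.swap_apply_right] using this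
        · rw [swapP_other a.2 d hk1 hk2]
          have : (a.1 * Equiv.swap d.i₀ d.j₀) k = a.1 k := by
            simp [Equiv.Perm.mul_apply, Equiv.swap_apply_of_ne_of_ne hk1 hk2]
          rw [this]
          exact hpath k
    · intro hdisj
      refine hdisj d.i₀ d.j₀ hne d.x₀ ⟨?_, ?_⟩
      · rw [swapP_i₀ a.2 hne]; simp
      · rw [swapP_j₀ a.2 d]; simp
  have hGG : ∀ a ∈ Bad, G (G a) = a := by
    intro a ha
    obtain ⟨hpath, hndisj⟩ := hmemBad a ha
    obtain ⟨d, hd, hGa, hnd⟩ := hkey a ha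
    have hflip : IsCanon (swapP a.2 d) d.flip := isCanon_swap hd hnd
    have hex' : ∃ d' : CData V n, IsCanon (swapP a.2 d) d' := ⟨d.flip, hflip⟩
    have hchoose : hex'.choose = d.flip := canon_unique hex'.choose_spec hflip
    rw [hGa, hG]
    simp only [dif_pos hex', hchoose]
    have h1 : a.1 * Equiv.swap d.i₀ d.j₀ * Equiv.swap d.flip.i₀ d.flip.j₀ = a.1 := by
      show a.1 * Equiv.swap d.i₀ d.j₀ * Equiv.swap d.i₀ d.j₀ = a.1
      rw [mul_assoc, Equiv.swap_mul_self, mul_one]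
    have h2 : swapP (swapP a.2 d) d.flip = a.2 := swapP_flip hd
    exact Sigma.ext h1 (heq_of_eq h2)
  have hGne : ∀ a ∈ Bad, G a ≠ a := by
    intro a ha heq
    obtain ⟨d, hd, hGa, hnd⟩ := hkey a ha
    have hne : d.i₀ ≠ d.j₀ := ne_of_lt hd.i₀_lt_j₀
    rw [hGa] at heq
    have h1 : a.1 * Equiv.swap d.i₀ d.j₀ = a.1 := congrArg Sigma.fst heq
    have h2 : a.1 d.j₀ = a.1 d.i₀ := by
      have := congrArg (fun e : Equiv.Perm (Fin n) => e d.i₀) h1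
      simpa [Equiv.Perm.mul_apply, Equiv.swap_apply_left] using this
    exact hne (a.1.injective h2).symm
  refine Finset.sum_involution (fun a _ => G a) ?_ (fun a ha _ => hGne a ha)
    (fun a ha => hGmem a ha) (fun a ha => hGG a ha)
  intro a ha
  obtain ⟨d, hd, hGa, hnd⟩ := hkey a ha
  have hne : d.i₀ ≠ d.j₀ := ne_of_lt hd.i₀_lt_j₀
  rw [hGa]
  have hW : ∏ i, listWt w (swapP a.2 d i) = ∏ i, listWt w (a.2 i) := prod_swapP w hd
  show (Equiv.Perm.sign a.1) • ∏ i, listWt w (a.2 i)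
      + (Equiv.Perm.sign (a.1 * Equiv.swap d.i₀ d.j₀)) • ∏ i, listWt w (swapP a.2 d i) = 0
  rw [hW, Equiv.Perm.sign_mul, Equiv.Perm.sign_swap hne]
  rcases Int.units_eq_one_or (Equiv.Perm.sign a.1) with h | h <;> rw [h] <;>
    simp [Units.smul_def]

end BadSum

end LGVAux

/-- The Lindström–Gessel–Viennot identity in the compatible case. -/


theorem lgv_compatible {V R : Type*} [Fintype V] [CommRing R]
    (Adj : V → V → Prop) (hacyc : ∀ a, ¬ Relation.TransGen Adj a a)
    (w : V → V → R) (n : ℕ) (u v : Fin n → V)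
    (hcompat : ∀ i j k l : Fin n, i < j → l < k →
      ∀ p q : List V, IsDirPath Adj (u i) (v k) p → IsDirPath Adj (u j) (v l) q →
        ∃ x : V, x ∈ p ∧ x ∈ q) :
    (∑ᶠ P ∈ {P : Fin n → List V |
        (∀ i, IsDirPath Adj (u i) (v i) (P i)) ∧
        ∀ i j, i ≠ j → ∀ x : V, ¬(x ∈ P i ∧ x ∈ P j)},
      ∏ i, listWt w (P i)) =
      Matrix.det (Matrix.of fun i j : Fin n =>
        ∑ᶠ p ∈ {p : List V | IsDirPath Adj (u i) (v j) p}, listWt w p) := by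
  classical
  have hfin : ∀ a b : V, {l : List V | IsDirPath Adj a b l}.Finite := by
    intro a b
    refine Set.Finite.subset (List.finite_length_le V (Fintype.card V)) ?_
    intro l hl
    exact (LGVAux.nodup_of_chain' hacyc hl.1).length_le_card
  set pf : Fin n → Fin n → Finset (List V) := fun i j => (hfin (u i) (v j)).toFinset with hpfdef
  have hpf : ∀ i j p, p ∈ pf i j ↔ IsDirPath Adj (u i) (v j) p := by
    intro i j p; exact Set.Finite.mem_toFinset _
  have hMat : (Matrix.of fun i j : Fin n =>
      ∑ᶠ p ∈ {p : List V | IsDirPath Adj (u i) (v j) p}, listWt w p)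
      = Matrix.of fun i j : Fin n => ∑ p ∈ pf i j, listWt w p := by
    ext i j
    simp only [Matrix.of_apply]
    rw [show {p : List V | IsDirPath Adj (u i) (v j) p} = ↑(pf i j) from
      ((hfin (u i) (v j)).coe_toFinset).symm, finsum_mem_coe_finset]
  rw [hMat]
  have hLHSset : {P : Fin n → List V |
        (∀ i, IsDirPath Adj (u i) (v i) (P i)) ∧
        ∀ i j, i ≠ j → ∀ x : V, ¬(x ∈ P i ∧ x ∈ P j)}
      = ↑((Fintype.piFinset fun i => pf i i).filter
          fun P => ∀ i j, i ≠ j → ∀ y : V, ¬(y ∈ P i ∧ y ∈ P j)) := by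
    ext P
    simp [Fintype.mem_piFinset, hpf]
  rw [hLHSset, finsum_mem_coe_finset]
  rw [← Matrix.det_transpose, Matrix.det_apply]
  simp only [Matrix.transpose_apply, Matrix.of_apply]
  -- now the RHS is  ∑ σ, sign σ • ∏ i, ∑ p ∈ pf i (σ i), listWt w p
  have hterm : ∀ σ : Equiv.Perm (Fin n),
      (∏ i, ∑ p ∈ pf i (σ i), listWt w p)
        = (∑ P ∈ (Fintype.piFinset fun i => pf i (σ i)).filter
              (fun P => ∀ i j, i ≠ j → ∀ y : V, ¬(y ∈ P i ∧ y ∈ P j)), ∏ i, listWt w (P i))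
          + ∑ P ∈ (Fintype.piFinset fun i => pf i (σ i)).filter
              (fun P => ¬ ∀ i j, i ≠ j → ∀ y : V, ¬(y ∈ P i ∧ y ∈ P j)), ∏ i, listWt w (P i) := by
    intro σ
    rw [Finset.prod_univ_sum, Finset.sum_filter_add_sum_filter_not]
  have hone : ∀ σ : Equiv.Perm (Fin n), σ ≠ 1 →
      (Fintype.piFinset fun i => pf i (σ i)).filter
        (fun P => ∀ i j, i ≠ j → ∀ y : V, ¬(y ∈ P i ∧ y ∈ P j)) = ∅ := by
    intro σ hσ
    rw [Finset.filter_eq_empty_iff]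
    intro P hP hD
    have hmono : ¬ StrictMono (σ : Fin n → Fin n) := by
      intro hmono
      apply hσ
      have hr : Set.range (σ : Fin n → Fin n) = Set.range (id : Fin n → Fin n) := by
        rw [Set.range_id, Set.range_eq_univ]
        exact σ.surjective
      haveI : WellFoundedLT (Fin n) := Finite.to_wellFoundedLT
      have := (hmono.range_inj strictMono_id).mp hr
      exact Equiv.ext fun x => congrFun this x
    rw [StrictMono] at hmono
    push_neg at hmono
    obtain ⟨i, j, hij, hle⟩ := hmono
    have hne : σ j ≠ σ i := fun hne => (ne_of_lt hij) (σ.injective hne).symm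
    have hlt : σ j < σ i := lt_of_le_of_ne hle hne
    obtain ⟨x, hx1, hx2⟩ := hcompat i j (σ i) (σ j) hij hlt (P i) (P j)
      ((hpf i (σ i) (P i)).mp (Fintype.mem_piFinset.mp hP i))
      ((hpf j (σ j) (P j)).mp (Fintype.mem_piFinset.mp hP j))
    exact hD i j (ne_of_lt hij) x ⟨hx1, hx2⟩
  have hb : ∑ σ : Equiv.Perm (Fin n), Equiv.Perm.sign σ •
      ∑ P ∈ (Fintype.piFinset fun i => pf i (σ i)).filter
        (fun P => ¬ ∀ i j, i ≠ j → ∀ y : V, ¬(y ∈ P i ∧ y ∈ P j)), ∏ i, listWt w (P i) = 0 := by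
    have h0 := LGVAux.sum_bad_zero Adj hacyc w n u v pf hpf
    rw [Finset.sum_sigma] at h0
    calc ∑ σ : Equiv.Perm (Fin n), Equiv.Perm.sign σ •
          ∑ P ∈ (Fintype.piFinset fun i => pf i (σ i)).filter
            (fun P => ¬ ∀ i j, i ≠ j → ∀ y : V, ¬(y ∈ P i ∧ y ∈ P j)), ∏ i, listWt w (P i)
        = ∑ σ : Equiv.Perm (Fin n), ∑ P ∈ (Fintype.piFinset fun i => pf i (σ i)).filter
            (fun P => ¬ ∀ i j, i ≠ j → ∀ y : V, ¬(y ∈ P i ∧ y ∈ P j)),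
              Equiv.Perm.sign σ • ∏ i, listWt w (P i) :=
          Finset.sum_congr rfl fun σ _ => Finset.smul_sum
      _ = 0 := h0
  have hg : ∑ σ : Equiv.Perm (Fin n), Equiv.Perm.sign σ •
      ∑ P ∈ (Fintype.piFinset fun i => pf i (σ i)).filter
        (fun P => ∀ i j, i ≠ j → ∀ y : V, ¬(y ∈ P i ∧ y ∈ P j)), ∏ i, listWt w (P i)
      = ∑ P ∈ (Fintype.piFinset fun i => pf i i).filter
          (fun P => ∀ i j, i ≠ j → ∀ y : V, ¬(y ∈ P i ∧ y ∈ P j)), ∏ i, listWt w (P i) := by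
    rw [Finset.sum_eq_single (1 : Equiv.Perm (Fin n))]
    · simp [Equiv.Perm.one_apply]
    · intro σ _ hσ
      rw [hone σ hσ]
      simp
    · intro h; exact absurd (Finset.mem_univ 1) h
  calc ∑ P ∈ (Fintype.piFinset fun i => pf i i).filter
          (fun P => ∀ i j, i ≠ j → ∀ y : V, ¬(y ∈ P i ∧ y ∈ P j)), ∏ i, listWt w (P i)
      = (∑ σ : Equiv.Perm (Fin n), Equiv.Perm.sign σ •
          ∑ P ∈ (Fintype.piFinset fun i => pf i (σ i)).filter
            (fun P => ∀ i j, i ≠ j → ∀ y : V, ¬(y ∈ P i ∧ y ∈ P j)), ∏ i, listWt w (P i))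
        + ∑ σ : Equiv.Perm (Fin n), Equiv.Perm.sign σ •
          ∑ P ∈ (Fintype.piFinset fun i => pf i (σ i)).filter
            (fun P => ¬ ∀ i j, i ≠ j → ∀ y : V, ¬(y ∈ P i ∧ y ∈ P j)), ∏ i, listWt w (P i) := by
        rw [hb, add_zero, hg]
    _ = ∑ σ : Equiv.Perm (Fin n), Equiv.Perm.sign σ • ∏ i, ∑ p ∈ pf i (σ i), listWt w p := by
        rw [← Finset.sum_add_distrib]
        exact Finset.sum_congr rfl fun σ _ => by rw [hterm σ, smul_add]
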